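/- Let D, L ∈ ℝ^{n×n} and sᵢ := Σ_{k=1}^{n} L_{k,i}² for i ∈ {1,…,n}. Assume ‖D‖₂ < 1, assume sᵢ > 0 for every i, and let p₁, …, pₙ ∈ (0,1] satisfy pᵢ > 1/(1 + (1 − ‖D‖₂²)/sᵢ) for every i. Then ‖Dᵀ D + Diag(−s₁ + s₁/p₁, …, −sₙ + sₙ/pₙ)‖₂ < 1. -/
import Mathlib

open Matrix

/-- The spectral norm (ℓ²-operator norm) of a real square matrix. -/
noncomputable def specNorm {n : ℕ} (M : Matrix (Fin n) (Fin n) ℝ) : ℝ :=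
  ‖LinearMap.toContinuousLinearMap (Matrix.toEuclideanLin M)‖

open scoped Matrix.Norms.L2Operator

lemma specNorm_eq {n : ℕ} (M : Matrix (Fin n) (Fin n) ℝ) : specNorm M = ‖M‖ := rfl

lemma specNorm_nonneg {n : ℕ} (M : Matrix (Fin n) (Fin n) ℝ) : 0 ≤ specNorm M :=
  norm_nonneg _

lemma specNorm_diagonal_le {n : ℕ} (d : Fin n → ℝ) {c : ℝ} (hc : 0 ≤ c)
    (h : ∀ i, |d i| ≤ c) : specNorm (Matrix.diagonal d) ≤ c := by
  apply ContinuousLinearMap.opNorm_le_bound _ hc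
  intro x
  have hx : (LinearMap.toContinuousLinearMap (Matrix.toEuclideanLin (Matrix.diagonal d))) x
      = (WithLp.equiv 2 (Fin n → ℝ)).symm ((Matrix.diagonal d) *ᵥ (WithLp.equiv 2 _ x)) := by
    simp [Matrix.toEuclideanLin_apply]
  rw [hx, EuclideanSpace.norm_eq, EuclideanSpace.norm_eq]
  rw [← Real.sqrt_sq hc, ← Real.sqrt_mul (sq_nonneg c)]
  apply Real.sqrt_le_sqrt
  rw [Finset.mul_sum]
  apply Finset.sum_le_sum
  intro i _
  have : ((WithLp.equiv 2 (Fin n → ℝ)).symm ((Matrix.diagonal d) *ᵥ (WithLp.equiv 2 _ x))) i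
      = d i * x i := by
    simp [Matrix.mulVec_diagonal]
  rw [this]
  have h1 : ‖d i * x i‖ ≤ c * ‖x i‖ := by
    rw [norm_mul]
    exact mul_le_mul_of_nonneg_right ((Real.norm_eq_abs _) ▸ h i) (norm_nonneg _)
  calc ‖d i * x i‖ ^ 2 ≤ (c * ‖x i‖) ^ 2 := by
        apply pow_le_pow_left₀ (norm_nonneg _) h1
    _ = c ^ 2 * ‖x i‖ ^ 2 := by ring

/-- Let `D, L ∈ ℝ^{n×n}`, `sᵢ := Σₖ L_{k,i}²`. If `‖D‖₂ < 1`, every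
`sᵢ > 0`, and `pᵢ ∈ (0,1]` satisfies `pᵢ > 1/(1 + (1 − ‖D‖₂²)/sᵢ)` for every `i`, then
`‖Dᵀ D + Diag(−s₁ + s₁/p₁, …, −sₙ + sₙ/pₙ)‖₂ < 1`. -/
theorem spectral_norm_lt_one_adaptive
    {n : ℕ} (D L : Matrix (Fin n) (Fin n) ℝ)
    (hD : specNorm D < 1)
    (hs : ∀ i, 0 < ∑ k, (L k i) ^ 2)
    (p : Fin n → ℝ) (hp : ∀ i, p i ∈ Set.Ioc (0 : ℝ) 1)
    (hpgt : ∀ i, p i > 1 / (1 + (1 - specNorm D ^ 2) / (∑ k, (L k i) ^ 2))) :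
    specNorm (Dᵀ * D + Matrix.diagonal
      (fun i => -(∑ k, (L k i) ^ 2) + (∑ k, (L k i) ^ 2) / p i)) < 1 := by
  set c := specNorm D with hc
  have hc0 : 0 ≤ c := specNorm_nonneg D
  have hc2 : c ^ 2 < 1 := by nlinarith
  set d : Fin n → ℝ := fun i => -(∑ k, (L k i) ^ 2) + (∑ k, (L k i) ^ 2) / p i with hd
  have hd0 : ∀ i, 0 ≤ d i := fun i => by
    have hpi := hp i
    have hsi := hs i
    have h1 : (∑ k, (L k i) ^ 2) ≤ (∑ k, (L k i) ^ 2) / p i := by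
      rw [le_div_iff₀ hpi.1]
      nlinarith [hpi.2, hsi]
    simp only [hd]; linarith
  have hdlt : ∀ i, d i < 1 - c ^ 2 := fun i => by
    have hpi := hp i
    have hsi := hs i
    have hgt := hpgt i
    have hden : (0:ℝ) < 1 + (1 - c ^ 2) / (∑ k, (L k i) ^ 2) := by
      have : 0 < (1 - c ^ 2) / (∑ k, (L k i) ^ 2) := div_pos (by linarith) hsi
      linarith
    have h1 : 1 < p i * (1 + (1 - c ^ 2) / (∑ k, (L k i) ^ 2)) := by
      rw [gt_iff_lt, div_lt_iff₀ hden] at hgt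
      linarith
    have h2 : (∑ k, (L k i) ^ 2) < p i * ((∑ k, (L k i) ^ 2) + (1 - c ^ 2)) := by
      have := mul_lt_mul_of_pos_left h1 hsi
      rw [mul_one] at this
      calc (∑ k, (L k i) ^ 2)
          < (∑ k, (L k i) ^ 2) * (p i * (1 + (1 - c ^ 2) / (∑ k, (L k i) ^ 2))) := this
        _ = p i * ((∑ k, (L k i) ^ 2) + (1 - c ^ 2)) := by
            field_simp
            try ring
    have h3 : (∑ k, (L k i) ^ 2) / p i < (∑ k, (L k i) ^ 2) + (1 - c ^ 2) := by
      rw [div_lt_iff₀ hpi.1]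
      linarith [mul_comm (p i) ((∑ k, (L k i) ^ 2) + (1 - c ^ 2))]
    simp only [hd]; linarith
  rcases Nat.eq_zero_or_pos n with hn | hn
  · subst hn
    have : (Dᵀ * D + Matrix.diagonal d) = 0 := by
      ext i j; exact absurd i.2 (by omega)
    rw [this, specNorm_eq, norm_zero]
    norm_num
  · haveI hne : Nonempty (Fin n) := Fin.pos_iff_nonempty.mp hn
    have i0 : Fin n := ⟨0, hn⟩
    set b := Finset.univ.sup' (Finset.univ_nonempty) d with hb
    have hble : ∀ i, d i ≤ b := fun i => Finset.le_sup' d (Finset.mem_univ i)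
    obtain ⟨j, -, hj⟩ := Finset.exists_mem_eq_sup' (Finset.univ_nonempty) d
    have hb0 : 0 ≤ b := le_trans (hd0 i0) (hble i0)
    have hblt : b < 1 - c ^ 2 := lt_of_eq_of_lt hj (hdlt j)
    have habs : ∀ i, |d i| ≤ b := fun i => abs_le.mpr ⟨by linarith [hd0 i], hble i⟩
    have hdiag : specNorm (Matrix.diagonal d) ≤ b := specNorm_diagonal_le d hb0 habs
    have htri : specNorm (Dᵀ * D + Matrix.diagonal d)
        ≤ specNorm (Dᵀ * D) + specNorm (Matrix.diagonal d) := by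
      simp only [specNorm_eq]
      exact norm_add_le _ _
    have hDD : specNorm (Dᵀ * D) = c * c := by
      rw [specNorm_eq]
      have : Dᵀ = Dᴴ := by
        ext i j; simp [Matrix.conjTranspose_apply]
      rw [this]
      exact Matrix.l2_opNorm_conjTranspose_mul_self D
    calc specNorm (Dᵀ * D + Matrix.diagonal d)
        ≤ specNorm (Dᵀ * D) + specNorm (Matrix.diagonal d) := htri
      _ ≤ c * c + b := by rw [hDD]; linarith
      _ < 1 := by nlinarith
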